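/- Let ε > 0, ℓ > 0, ξ ∈ ℝ, u₋ > 0, and let f : ℝ → ℝ be convex and continuously differentiable on [0, u₋] with f(0) = 0, F := f(u₋) > 0, and f'(u₋) > 0. Let κ ∈ (F, ε) be such that 0 < κ − f(s) < ε for every s ∈ [0, u₋], and suppose ξ + ℓ = ∫_0^{u₋} √(ε² − (f(s) − κ)²) / (κ − f(s)) ds. Then u₋ f'(u₋) / ( exp( f'(u₋)(ξ + ℓ + u₋)/ε ) − 1 ) ≤ κ − F ≤ F / ( exp( F (ξ + ℓ)/(ε u₋) ) − 1 ). -/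

import Mathlib

open Set Filter intervalIntegral

set_option maxHeartbeats 1000000 in
/-- two-sided exponential estimate for the integration constant
`κ = κ₋(ξ)` of the left half of the approximate steady state, where
`F = f(u₋) > 0`, `u₋ > 0`, `f` convex and C¹ on `[0, u₋]` with `f(0) = 0`,
`f'(u₋) > 0`, and `ξ + ℓ = ∫_0^{u₋} √(ε² − (f(s)−κ)²)/(κ − f(s)) ds`. -/
theorem kappa_minus_bounds
    (ε ℓ ξ um : ℝ) (hε : 0 < ε) (hℓ : 0 < ℓ) (hum : 0 < um)
    (f f' : ℝ → ℝ)
    (hconv : ConvexOn ℝ (Set.Icc 0 um) f)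
    (hderiv : ∀ s ∈ Set.Icc 0 um, HasDerivWithinAt f (f' s) (Set.Icc 0 um) s)
    (hf'cont : ContinuousOn f' (Set.Icc 0 um))
    (hf0 : f 0 = 0) (hF : 0 < f um) (hf'um : 0 < f' um)
    (κ : ℝ) (hκ : κ ∈ Set.Ioo (f um) ε)
    (hband : ∀ s ∈ Set.Icc 0 um, 0 < κ - f s ∧ κ - f s < ε)
    (himp : ξ + ℓ = ∫ s in (0:ℝ)..um, Real.sqrt (ε ^ 2 - (f s - κ) ^ 2) / (κ - f s)) :
    um * f' um / (Real.exp (f' um * (ξ + ℓ + um) / ε) - 1) ≤ κ - f um ∧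
    κ - f um ≤ f um / (Real.exp (f um * (ξ + ℓ) / (ε * um)) - 1) := by
  obtain ⟨hκF, hκε⟩ := hκ
  have hum0 : (0:ℝ) ≤ um := hum.le
  have huIcc : Set.uIcc (0:ℝ) um = Set.Icc 0 um := Set.uIcc_of_le hum0
  have hfc : ContinuousOn f (Set.Icc 0 um) := fun s hs => (hderiv s hs).continuousWithinAt
  set F := f um with hFdef
  set M := f' um with hMdef
  set K := κ - F with hKdef
  have hK : 0 < K := sub_pos.mpr hκF
  have hmemum : um ∈ Set.Icc (0:ℝ) um := Set.right_mem_Icc.mpr hum0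
  have hmem0 : (0:ℝ) ∈ Set.Icc (0:ℝ) um := Set.left_mem_Icc.mpr hum0
  -- chord bound: f s ≤ (F/um) s
  have chord : ∀ s ∈ Set.Icc (0:ℝ) um, f s ≤ F / um * s := by
    intro s hs
    rcases eq_or_lt_of_le hs.1 with h0 | h0
    · simp [← h0, hf0]
    · have hsec := hconv.secant_mono hmem0 hs hmemum (ne_of_gt h0) (ne_of_gt hum) hs.2
      rw [hf0] at hsec
      simp only [sub_zero] at hsec
      have : f s / s * s ≤ F / um * s := mul_le_mul_of_nonneg_right hsec h0.le
      calc f s = f s / s * s := by field_simp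
        _ ≤ F / um * s := this
  -- tangent bound: F + M (s - um) ≤ f s
  have tangent : ∀ s ∈ Set.Icc (0:ℝ) um, F + M * (s - um) ≤ f s := by
    intro s hs
    rcases eq_or_lt_of_le hs.2 with h | h
    · simp [h, hFdef]
    have hslope : Tendsto (slope f um) (nhdsWithin um (Set.Icc 0 um \ {um})) (nhds M) :=
      hasDerivWithinAt_iff_tendsto_slope.mp (hderiv um hmemum)
    have hsetE : Set.Ico (0:ℝ) um ⊆ Set.Icc 0 um \ {um} :=
      fun t ht => ⟨⟨ht.1, ht.2.le⟩, ne_of_lt ht.2⟩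
    haveI hne' : (nhdsWithin um (Set.Icc (0:ℝ) um \ {um})).NeBot :=
      Filter.NeBot.mono (right_nhdsWithin_Ico_neBot hum) (nhdsWithin_mono _ hsetE)
    have hev : ∀ᶠ t in nhdsWithin um (Set.Icc (0:ℝ) um \ {um}),
        slope f um s ≤ slope f um t := by
      filter_upwards [self_mem_nhdsWithin,
        ((eventually_gt_nhds h).filter_mono nhdsWithin_le_nhds)] with t ht hst
      have hsec := hconv.secant_mono hmemum hs ht.1 (ne_of_lt h) ht.2 hst.le
      rw [slope_def_field, slope_def_field]
      exact hsec
    have hle : slope f um s ≤ M := ge_of_tendsto hslope hev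
    rw [slope_def_field] at hle
    have hsum : s - um < 0 := sub_neg.mpr h
    have := (div_le_iff_of_neg hsum).mp hle
    linarith
  -- band with linear bounds
  have hlin1 : ∀ s ∈ Set.Icc (0:ℝ) um, 0 < κ - F / um * s := by
    intro s hs
    have : F / um * s ≤ F := by
      rw [div_mul_eq_mul_div, div_le_iff₀ hum]
      nlinarith [hs.2, hF]
    linarith
  have hlin2 : ∀ s ∈ Set.Icc (0:ℝ) um, 0 < K + M * (um - s) := by
    intro s hs
    nlinarith [hs.2, hf'um]
  -- integrand definitions
  set g : ℝ → ℝ := fun s => Real.sqrt (ε ^ 2 - (f s - κ) ^ 2) / (κ - f s) with hgdef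
  -- continuity / integrability
  have hcden : ContinuousOn (fun s => κ - f s) (Set.Icc 0 um) := continuousOn_const.sub hfc
  have hgcont : ContinuousOn g (Set.Icc 0 um) := by
    apply ContinuousOn.div
    · exact Real.continuous_sqrt.comp_continuousOn
        (continuousOn_const.sub ((hfc.sub continuousOn_const).pow 2))
    · exact hcden
    · intro s hs; exact ne_of_gt (hband s hs).1
  have hgint : IntervalIntegrable g MeasureTheory.volume 0 um :=
    (hgcont.mono (by rw [huIcc])).intervalIntegrable
  have h1cont : ContinuousOn (fun s => ε / (κ - F / um * s)) (Set.Icc 0 um) := by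
    apply ContinuousOn.div continuousOn_const
    · exact continuousOn_const.sub (continuousOn_const.mul continuousOn_id)
    · intro s hs; exact ne_of_gt (hlin1 s hs)
  have h1int : IntervalIntegrable (fun s => ε / (κ - F / um * s))
      MeasureTheory.volume 0 um := (h1cont.mono (by rw [huIcc])).intervalIntegrable
  have h2cont : ContinuousOn (fun s => ε / (K + M * (um - s)) - 1) (Set.Icc 0 um) := by
    apply ContinuousOn.sub _ continuousOn_const
    apply ContinuousOn.div continuousOn_const
    · exact continuousOn_const.add (continuousOn_const.mul
        (continuousOn_const.sub continuousOn_id))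
    · intro s hs; exact ne_of_gt (hlin2 s hs)
  have h2int : IntervalIntegrable (fun s => ε / (K + M * (um - s)) - 1)
      MeasureTheory.volume 0 um := (h2cont.mono (by rw [huIcc])).intervalIntegrable
  -- pointwise bounds
  have hgle : ∀ s ∈ Set.Icc (0:ℝ) um, g s ≤ ε / (κ - F / um * s) := by
    intro s hs
    obtain ⟨hb1, hb2⟩ := hband s hs
    have hnum : Real.sqrt (ε ^ 2 - (f s - κ) ^ 2) ≤ ε := by
      calc Real.sqrt (ε ^ 2 - (f s - κ) ^ 2) ≤ Real.sqrt (ε ^ 2) :=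
            Real.sqrt_le_sqrt (by nlinarith)
        _ = ε := Real.sqrt_sq hε.le
    have hden : κ - F / um * s ≤ κ - f s := by linarith [chord s hs]
    exact div_le_div₀ hε.le hnum (hlin1 s hs) hden
  have hgge : ∀ s ∈ Set.Icc (0:ℝ) um, ε / (K + M * (um - s)) - 1 ≤ g s := by
    intro s hs
    obtain ⟨hb1, hb2⟩ := hband s hs
    have hnum : ε - (κ - f s) ≤ Real.sqrt (ε ^ 2 - (f s - κ) ^ 2) := by
      rw [Real.le_sqrt (by linarith) (by nlinarith)]
      nlinarith
    have step1 : ε / (κ - f s) - 1 ≤ g s := by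
      have heq : ε / (κ - f s) - 1 = (ε - (κ - f s)) / (κ - f s) := by
        field_simp
      rw [heq]
      show (ε - (κ - f s)) / (κ - f s) ≤
        Real.sqrt (ε ^ 2 - (f s - κ) ^ 2) / (κ - f s)
      exact (div_le_div_iff_of_pos_right hb1).mpr hnum
    have hden : κ - f s ≤ K + M * (um - s) := by
      have := tangent s hs; simp only [hKdef]; linarith
    have step2 : ε / (K + M * (um - s)) ≤ ε / (κ - f s) :=
      div_le_div_of_nonneg_left hε.le hb1 hden
    linarith
  -- positivity of ξ + ℓ
  have hIpos : 0 < ξ + ℓ := by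
    rw [himp]
    apply intervalIntegral.intervalIntegral_pos_of_pos_on hgint _ hum
    intro s hs
    have hs' : s ∈ Set.Icc (0:ℝ) um := ⟨hs.1.le, hs.2.le⟩
    obtain ⟨hb1, hb2⟩ := hband s hs'
    apply div_pos _ hb1
    apply Real.sqrt_pos.mpr
    nlinarith
  -- compute first integral
  have hc : 0 < F / um := div_pos hF hum
  have hcne : F / um ≠ 0 := ne_of_gt hc
  have hint1 : (∫ s in (0:ℝ)..um, ε / (κ - F / um * s)) =
      ε * um / F * Real.log (κ / K) := by
    have hG : ∀ s ∈ Set.uIcc (0:ℝ) um,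
        HasDerivAt (fun t => -(ε / (F / um)) * Real.log (κ - F / um * t))
          (ε / (κ - F / um * s)) s := by
      intro s hs
      rw [huIcc] at hs
      have hpos := hlin1 s hs
      have h1 : HasDerivAt (fun t : ℝ => κ - F / um * t) (-(F / um)) s := by
        simpa using ((hasDerivAt_id s).const_mul (F / um)).const_sub κ
      have h2 := (h1.log (ne_of_gt hpos)).const_mul (-(ε / (F / um)))
      have hne2 : κ * um - F * s ≠ 0 := by
        have hq : F / um * s * um = F * s := by field_simp
        have := mul_pos hpos hum
        nlinarith [this, hq]
      refine h2.congr_deriv ?_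
      field_simp
    rw [intervalIntegral.integral_eq_sub_of_hasDerivAt hG h1int]
    have hFum : F / um * um = F := by field_simp
    have hκpos : 0 < κ := lt_trans hF hκF
    rw [hFum]
    rw [Real.log_div (ne_of_gt hκpos) (ne_of_gt hK)]
    have : κ - F = K := rfl
    rw [this]
    field_simp
    ring
    rw [mul_comm um κ, mul_assoc, mul_inv_cancel₀ (ne_of_gt hum), mul_one]
  -- compute second integral
  have hMne : M ≠ 0 := ne_of_gt hf'um
  have hint2 : (∫ s in (0:ℝ)..um, (ε / (K + M * (um - s)) - 1)) =
      ε / M * Real.log ((K + M * um) / K) - um := by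
    have hH : ∀ s ∈ Set.uIcc (0:ℝ) um,
        HasDerivAt (fun t => -(ε / M) * Real.log (K + M * (um - t)) - t)
          (ε / (K + M * (um - s)) - 1) s := by
      intro s hs
      rw [huIcc] at hs
      have hpos := hlin2 s hs
      have h1 : HasDerivAt (fun t : ℝ => K + M * (um - t)) (-M) s := by
        have : HasDerivAt (fun t : ℝ => um - t) (-1 : ℝ) s := by
          simpa using (hasDerivAt_id s).const_sub um
        simpa using (this.const_mul M).const_add K
      have h2 := ((h1.log (ne_of_gt hpos)).const_mul (-(ε / M))).sub (hasDerivAt_id s)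
      have hne2 : K + M * (um - s) ≠ 0 := ne_of_gt hpos
      refine h2.congr_deriv ?_
      field_simp
      try ring
    rw [intervalIntegral.integral_eq_sub_of_hasDerivAt hH h2int]
    have hKM : 0 < K + M * um := by nlinarith
    rw [Real.log_div (ne_of_gt hKM) (ne_of_gt hK)]
    simp only [sub_self, mul_zero, add_zero, sub_zero]
    field_simp
    ring
  -- integral comparisons
  have hI1 : ξ + ℓ ≤ ε * um / F * Real.log (κ / K) := by
    rw [himp, ← hint1]
    exact intervalIntegral.integral_mono_on hum0 hgint h1int hgle
  have hI2 : ε / M * Real.log ((K + M * um) / K) - um ≤ ξ + ℓ := by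
    rw [himp, ← hint2]
    exact intervalIntegral.integral_mono_on hum0 h2int hgint hgge
  have hκpos : 0 < κ := lt_trans hF hκF
  constructor
  · -- lower bound
    have hLlog : M * (ξ + ℓ + um) / ε ≥ Real.log ((K + M * um) / K) := by
      rw [ge_iff_le, le_div_iff₀ hε]
      have := hI2
      have h' : ε / M * Real.log ((K + M * um) / K) ≤ ξ + ℓ + um := by linarith
      calc Real.log ((K + M * um) / K) * ε
          = M * (ε / M * Real.log ((K + M * um) / K)) := by field_simp
        _ ≤ M * (ξ + ℓ + um) := by
            exact mul_le_mul_of_nonneg_left h' hf'um.le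
    have hKM : 0 < K + M * um := by nlinarith
    have hexp : (K + M * um) / K ≤ Real.exp (M * (ξ + ℓ + um) / ε) := by
      calc (K + M * um) / K = Real.exp (Real.log ((K + M * um) / K)) :=
            (Real.exp_log (div_pos hKM hK)).symm
        _ ≤ Real.exp (M * (ξ + ℓ + um) / ε) := Real.exp_le_exp.mpr hLlog
    have hE1 : (1:ℝ) < Real.exp (M * (ξ + ℓ + um) / ε) := by
      apply Real.one_lt_exp_iff.mpr
      positivity
    rw [div_le_iff₀ (by linarith)]
    have hKdiv : (K + M * um) / K = 1 + M * um / K := by field_simp [ne_of_gt hK]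
    rw [hKdiv] at hexp
    have : M * um / K ≤ Real.exp (M * (ξ + ℓ + um) / ε) - 1 := by linarith
    have := (div_le_iff₀ hK).mp this
    nlinarith
  · -- upper bound
    have hLlog : F * (ξ + ℓ) / (ε * um) ≤ Real.log (κ / K) := by
      rw [div_le_iff₀ (by positivity)]
      calc F * (ξ + ℓ) ≤ F * (ε * um / F * Real.log (κ / K)) :=
            mul_le_mul_of_nonneg_left hI1 hF.le
        _ = Real.log (κ / K) * (ε * um) := by field_simp
    have hexp : Real.exp (F * (ξ + ℓ) / (ε * um)) ≤ κ / K := by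
      calc Real.exp (F * (ξ + ℓ) / (ε * um)) ≤ Real.exp (Real.log (κ / K)) :=
            Real.exp_le_exp.mpr hLlog
        _ = κ / K := Real.exp_log (div_pos hκpos hK)
    have hE1 : (1:ℝ) < Real.exp (F * (ξ + ℓ) / (ε * um)) := by
      apply Real.one_lt_exp_iff.mpr
      positivity
    rw [le_div_iff₀ (by linarith)]
    have hκdiv : κ / K = 1 + F / K := by
      rw [hKdef]; field_simp [ne_of_gt hK]; ring
    rw [hκdiv] at hexp
    have : Real.exp (F * (ξ + ℓ) / (ε * um)) - 1 ≤ F / K := by linarith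
    have := (le_div_iff₀ hK).mp this
    nlinarith
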